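/- Let ρ be a convex risk measure and define the risk indifference price I(ρ)(x) = inf{c ∈ ℝ : inf_{m∈M} ρ(c + m + x) ≤ inf_{m∈M} ρ(m)}. If I(ρ) is (-∞,∞]-valued, then inf_{m∈M} ρ(m) is finite, I(ρ) is a convex risk measure, and its conjugate satisfies I(ρ)*(g) = ρ*(g) + inf_{m∈M} ρ(m) if g is a positive normalized linear functional with g(m) ≤ 0 for all m ∈ M, and I(ρ)*(g) = ∞ otherwise. -/

import Mathlib

noncomputable section
open MeasureTheory Filter Topology

variable {Ω : Type*} [MeasurableSpace Ω]

namespace ERealAux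

lemma iInf_sub_coe {ι : Sort*} (f : ι → EReal) (r : ℝ) :
    (⨅ i, f i) - (r : EReal) = ⨅ i, (f i - (r : EReal)) := by
  apply le_antisymm
  · exact le_iInf fun i => EReal.sub_le_sub (iInf_le f i) le_rfl
  · refine (EReal.le_sub_iff_add_le (Or.inl (EReal.coe_ne_bot r))
      (Or.inl (EReal.coe_ne_top r))).2 (le_iInf fun i => ?_)
    calc (⨅ j, f j - (r:EReal)) + r ≤ (f i - r) + r := add_le_add_left (iInf_le _ i) _
    _ = f i := EReal.sub_add_cancel

lemma iSup_add_coe {ι : Sort*} (f : ι → EReal) (r : ℝ) :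
    (⨆ i, f i) + (r : EReal) = ⨆ i, (f i + (r : EReal)) := by
  apply le_antisymm
  · have h1 : (⨆ i, f i) ≤ (⨆ i, f i + (r:EReal)) - r := by
      refine iSup_le fun i => ?_
      refine (EReal.le_sub_iff_add_le (Or.inl (EReal.coe_ne_bot r))
        (Or.inl (EReal.coe_ne_top r))).2 ?_
      exact le_iSup (fun i => f i + (r:EReal)) i
    calc (⨆ i, f i) + (r:EReal) ≤ ((⨆ i, f i + (r:EReal)) - r) + r := add_le_add_left h1 _
    _ = _ := EReal.sub_add_cancel
  · exact iSup_le fun i => add_le_add_left (le_iSup f i) _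

lemma eq_bot_of_forall_le {x : EReal} (h : ∀ r : ℝ, x ≤ (r : EReal)) : x = ⊥ := by
  induction x using EReal.rec with
  | bot => rfl
  | coe y => exact absurd (EReal.coe_le_coe_iff.1 (h (y - 1))) (by linarith)
  | top => exact absurd (h 0) (by simp)

lemma eq_top_of_forall_le {x : EReal} (h : ∀ r : ℝ, (r : EReal) ≤ x) : x = ⊤ := by
  induction x using EReal.rec with
  | top => rfl
  | coe y => exact absurd (EReal.coe_le_coe_iff.1 (h (y + 1))) (by linarith)
  | bot => exact absurd (h 0) (by simp)

lemma le_coe_of_forall_lt {x : EReal} {c : ℝ} (h : ∀ ε : ℝ, 0 < ε → x ≤ ((c + ε : ℝ) : EReal)) :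
    x ≤ (c : EReal) := by
  by_contra hlt
  push_neg at hlt
  obtain ⟨y, hy1, hy2⟩ := EReal.exists_between_coe_real hlt
  have h2 := h (y - c) (by exact_mod_cast sub_pos.2 (EReal.coe_lt_coe_iff.1 hy1))
  rw [show c + (y - c) = y by ring] at h2
  exact absurd (h2.trans_lt hy2) (lt_irrefl _)

lemma coe_le_of_forall_lt {x : EReal} {c : ℝ} (h : ∀ ε : ℝ, 0 < ε → ((c - ε : ℝ) : EReal) ≤ x) :
    (c : EReal) ≤ x := by
  by_contra hlt
  push_neg at hlt
  obtain ⟨y, hy1, hy2⟩ := EReal.exists_between_coe_real hlt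
  have h2 := h (c - y) (by exact_mod_cast sub_pos.2 (EReal.coe_lt_coe_iff.1 hy2))
  rw [show c - (c - y) = y by ring] at h2
  exact absurd (hy1.trans_le h2) (lt_irrefl _)

lemma coe_sub_iInf {ι : Sort*} (f : ι → EReal) (t : ℝ) :
    (t : EReal) - (⨅ i, f i) = ⨆ i, ((t : EReal) - f i) := by
  apply le_antisymm
  · obtain h | hnb := eq_or_ne (⨅ i, f i) ⊥
    · rw [h, EReal.coe_sub_bot]
      refine (eq_top_of_forall_le fun r => ?_).ge
      have hlt : (⨅ i, f i) < ((t - r : ℝ) : EReal) := by rw [h]; exact EReal.bot_lt_coe _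
      obtain ⟨i, hi⟩ := iInf_lt_iff.1 hlt
      calc (r : EReal) = ((t - (t - r) : ℝ) : EReal) := by norm_num
      _ = (t : EReal) - ((t - r : ℝ) : EReal) := by rw [← EReal.coe_sub]
      _ ≤ (t : EReal) - f i := EReal.sub_le_sub le_rfl hi.le
      _ ≤ _ := le_iSup (fun i => (t:EReal) - f i) i
    obtain h | hnt := eq_or_ne (⨅ i, f i) ⊤
    · rw [h, EReal.sub_top]; exact bot_le
    · obtain ⟨b, h⟩ : ∃ b : ℝ, (⨅ i, f i) = (b : EReal) := by
        lift (⨅ i, f i) to ℝ using ⟨hnt, hnb⟩ with b hb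
        exact ⟨b, rfl⟩
      rw [h, ← EReal.coe_sub]
      apply coe_le_of_forall_lt fun ε hε => ?_
      have hlt : (⨅ i, f i) < ((b + ε : ℝ) : EReal) := by
        rw [h]; exact_mod_cast (by linarith : b < b + ε)
      obtain ⟨i, hi⟩ := iInf_lt_iff.1 hlt
      calc ((t - b - ε : ℝ) : EReal) = (t : EReal) - ((b + ε : ℝ) : EReal) := by
            norm_cast; ring
      _ ≤ (t : EReal) - f i := EReal.sub_le_sub le_rfl hi.le
      _ ≤ _ := le_iSup (fun i => (t:EReal) - f i) i
  · exact iSup_le fun i => EReal.sub_le_sub le_rfl (iInf_le f i)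

lemma sub_sub_comm (u : EReal) (c d : ℝ) : (u - c) - d = (u - d) - c := by
  rw [sub_eq_add_neg, sub_eq_add_neg, sub_eq_add_neg, sub_eq_add_neg, add_assoc, add_assoc,
    add_comm (-(c:EReal))]

lemma coe_sub_sub (t r : ℝ) {u : EReal} (hu : u ≠ ⊥) :
    (t : EReal) - (u - (r : EReal)) = ((t : EReal) - u) + (r : EReal) := by
  induction u using EReal.rec with
  | bot => exact absurd rfl hu
  | top => rw [EReal.top_sub_coe, EReal.sub_top, EReal.bot_add]
  | coe v => norm_cast; ring

lemma coe_mul_ne_bot {b : ℝ} (hb : 0 < b) {u : EReal} (hu : u ≠ ⊥) : (b : EReal) * u ≠ ⊥ := by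
  induction u using EReal.rec with
  | bot => exact absurd rfl hu
  | top => rw [EReal.coe_mul_top_of_pos hb]; simp
  | coe v => rw [← EReal.coe_mul]; exact EReal.coe_ne_bot _

lemma sub_coe_ne_bot {u : EReal} (hu : u ≠ ⊥) (r : ℝ) : u - (r : EReal) ≠ ⊥ := by
  intro h
  rw [sub_eq_add_neg, ← EReal.coe_neg] at h
  rcases EReal.add_eq_bot_iff.1 h with h' | h'
  · exact hu h'
  · exact EReal.coe_ne_bot _ h'

end ERealAux

/-- The risk indifference price
`I(ρ)(x) = inf {c ∈ ℝ : inf_{m∈M} ρ(c + m + x) ≤ inf_{m∈M} ρ(m)}`. -/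
def riskIndiff (M : Set (Ω → ℝ)) (ρ : (Ω → ℝ) → EReal) (x : Ω → ℝ) : EReal :=
  sInf {c : EReal | ∃ r : ℝ, c = (r : EReal) ∧
    (⨅ m ∈ M, ρ (fun ω => r + m ω + x ω)) ≤ ⨅ m ∈ M, ρ m}

/-- The conjugate `ρ*(g) = sup_{x ∈ L} {g(x) - ρ(-x)}`. -/
def conjRM (L : Set (Ω → ℝ)) (ρ : (Ω → ℝ) → EReal) (g : (Ω → ℝ) →ₗ[ℝ] ℝ) : EReal :=
  ⨆ x ∈ L, ((↑(g x) : EReal) - ρ (-x))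

/-- if the risk indifference price `I(ρ)` of a convex risk measure `ρ`
is `(-∞,∞]`-valued, then `inf_{m∈M} ρ(m)` is finite, `I(ρ)` is a convex risk measure,
and `I(ρ)*(g) = ρ*(g) + inf_{m∈M} ρ(m)` for positive normalized `g` vanishing
nonpositively on `M`, while `I(ρ)*(g) = ∞` otherwise. -/
theorem stmt_8 (μ : Measure Ω) [IsProbabilityMeasure μ]
    (L : Submodule ℝ (Ω → ℝ)) (hconst : ∀ c : ℝ, (fun _ => c) ∈ L)
    (M : Set (Ω → ℝ)) (hML : M ⊆ (L : Set (Ω → ℝ)))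
    (hMconv : Convex ℝ M)
    (hMcone : ∀ m ∈ M, ∀ c : ℝ, 0 ≤ c → c • m ∈ M)
    (hMneg : ∀ x ∈ L, x ≤ᵐ[μ] (0 : Ω → ℝ) → x ∈ M)
    (ρ : (Ω → ℝ) → EReal)
    (hproper : ρ 0 < ⊤) (hbot : ∀ x ∈ L, ρ x ≠ ⊥)
    (hmono : ∀ x ∈ L, ∀ y ∈ L, x ≤ᵐ[μ] y → ρ y ≤ ρ x)
    (hcash : ∀ x ∈ L, ∀ c : ℝ, ρ (fun ω => x ω + c) = ρ x - (c : EReal))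
    (hconv : ∀ x ∈ L, ∀ y ∈ L, ∀ a : ℝ, 0 ≤ a → a ≤ 1 →
      ρ (fun ω => a * x ω + (1 - a) * y ω) ≤ (a : EReal) * ρ x + ((1 - a : ℝ) : EReal) * ρ y)
    (hIbot : ∀ x ∈ L, riskIndiff M ρ x ≠ ⊥) :
    -- `inf_{m∈M} ρ(m)` is finite
    (∃ r0 : ℝ, (⨅ m ∈ M, ρ m) = (r0 : EReal)) ∧
    -- `I(ρ)` is a convex risk measure
    riskIndiff M ρ 0 < ⊤ ∧
    (∀ x ∈ L, ∀ y ∈ L, x ≤ᵐ[μ] y → riskIndiff M ρ y ≤ riskIndiff M ρ x) ∧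
    (∀ x ∈ L, ∀ c : ℝ, riskIndiff M ρ (fun ω => x ω + c) = riskIndiff M ρ x - (c : EReal)) ∧
    (∀ x ∈ L, ∀ y ∈ L, ∀ a : ℝ, 0 ≤ a → a ≤ 1 →
      riskIndiff M ρ (fun ω => a * x ω + (1 - a) * y ω) ≤
        (a : EReal) * riskIndiff M ρ x + ((1 - a : ℝ) : EReal) * riskIndiff M ρ y) ∧
    -- the conjugate of `I(ρ)`
    (∀ g : (Ω → ℝ) →ₗ[ℝ] ℝ, (∀ x ∈ L, (0 : Ω → ℝ) ≤ᵐ[μ] x → 0 ≤ g x) →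
      ((g (fun _ => 1) = 1 ∧ ∀ m ∈ M, g m ≤ 0) →
        conjRM (L : Set (Ω → ℝ)) (riskIndiff M ρ) g =
          conjRM (L : Set (Ω → ℝ)) ρ g + ⨅ m ∈ M, ρ m) ∧
      (¬ (g (fun _ => 1) = 1 ∧ ∀ m ∈ M, g m ≤ 0) →
        conjRM (L : Set (Ω → ℝ)) (riskIndiff M ρ) g = ⊤)) := by
  classical
  have h0M : (0 : Ω → ℝ) ∈ M := hMneg 0 L.zero_mem (Filter.EventuallyLE.refl _ _)
  have hAtop : (⨅ m ∈ M, ρ m) ≠ ⊤ :=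
    ne_top_of_le_ne_top hproper.ne (iInf₂_le (0 : Ω → ℝ) h0M)
  have hadd : ∀ x ∈ L, ∀ m ∈ M, (fun ω => m ω + x ω) ∈ L := fun x hx m hm =>
    L.add_mem (hML hm) hx
  have hL1 : ∀ x ∈ L, ∀ r : ℝ,
      (⨅ m ∈ M, ρ (fun ω => r + m ω + x ω))
        = (⨅ m ∈ M, ρ (fun ω => m ω + x ω)) - (r : EReal) := by
    intro x hx r
    rw [show (⨅ m ∈ M, ρ (fun ω => m ω + x ω)) - (r:EReal)
        = ⨅ m ∈ M, (ρ (fun ω => m ω + x ω) - (r:EReal)) by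
      rw [ERealAux.iInf_sub_coe]
      exact iInf_congr fun m => ERealAux.iInf_sub_coe _ r]
    refine iInf_congr fun m => iInf_congr fun hm => ?_
    rw [show (fun ω => r + m ω + x ω) = (fun ω => (fun ω' => m ω' + x ω') ω + r) from
      funext fun ω => by ring]
    exact hcash _ (hadd x hx m hm) r
  have hB0 : (⨅ m ∈ M, ρ (fun ω => m ω + (0 : Ω → ℝ) ω)) = ⨅ m ∈ M, ρ m := by
    exact iInf_congr fun m => iInf_congr fun _ => congrArg ρ (funext fun ω => by simp)
  have hAbot : (⨅ m ∈ M, ρ m) ≠ ⊥ := by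
    intro h
    refine hIbot 0 L.zero_mem (ERealAux.eq_bot_of_forall_le fun r => ?_)
    rw [riskIndiff]
    refine sInf_le ⟨r, rfl, ?_⟩
    rw [hL1 0 L.zero_mem r, hB0, h, EReal.bot_sub]
  obtain ⟨r0, hr0⟩ : ∃ r0 : ℝ, (⨅ m ∈ M, ρ m) = (r0 : EReal) := by
    lift (⨅ m ∈ M, ρ m) to ℝ using ⟨hAtop, hAbot⟩ with b hb
    exact ⟨b, rfl⟩
  have hform : ∀ x ∈ L, riskIndiff M ρ x
      = (⨅ m ∈ M, ρ (fun ω => m ω + x ω)) - (r0 : EReal) := by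
    intro x hx
    rw [riskIndiff, hr0]
    have hset : {c : EReal | ∃ r : ℝ, c = (r : EReal) ∧
        (⨅ m ∈ M, ρ (fun ω => r + m ω + x ω)) ≤ (r0 : EReal)}
        = {c : EReal | ∃ r : ℝ, c = (r : EReal) ∧
        (⨅ m ∈ M, ρ (fun ω => m ω + x ω)) - (r : EReal) ≤ (r0 : EReal)} :=
      Set.ext fun c => exists_congr fun r => and_congr_right fun _ => by
        rw [hL1 x hx r]
    rw [hset]
    obtain hb | hnb := eq_or_ne (⨅ m ∈ M, ρ (fun ω => m ω + x ω)) ⊥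
    · rw [hb, EReal.bot_sub]
      refine ERealAux.eq_bot_of_forall_le fun r => ?_
      exact sInf_le ⟨r, rfl, le_of_eq_of_le (EReal.bot_sub _) bot_le⟩
    obtain ht | hnt := eq_or_ne (⨅ m ∈ M, ρ (fun ω => m ω + x ω)) ⊤
    · rw [ht, EReal.top_sub_coe]
      refine sInf_eq_top.2 fun c hc => ?_
      obtain ⟨r, rfl, hcond⟩ := hc
      rw [EReal.top_sub_coe] at hcond
      exact absurd hcond (by simp)
    · obtain ⟨b, hb⟩ : ∃ b : ℝ, (⨅ m ∈ M, ρ (fun ω => m ω + x ω)) = (b : EReal) := by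
        lift (⨅ m ∈ M, ρ (fun ω => m ω + x ω)) to ℝ using ⟨hnt, hnb⟩ with b
        exact ⟨b, rfl⟩
      rw [hb, ← EReal.coe_sub]
      apply le_antisymm
      · refine sInf_le ⟨b - r0, rfl, ?_⟩
        exact_mod_cast (by linarith : b - (b - r0) ≤ r0)
      · refine le_sInf fun c hc => ?_
        obtain ⟨r, rfl, hcond⟩ := hc
        have hbr : b - r ≤ r0 := by exact_mod_cast hcond
        exact_mod_cast (by linarith : b - r0 ≤ r)
  have hBbot : ∀ x ∈ L, (⨅ m ∈ M, ρ (fun ω => m ω + x ω)) ≠ ⊥ := by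
    intro x hx h
    exact hIbot x hx (by rw [hform x hx, h, EReal.bot_sub])
  refine ⟨⟨r0, hr0⟩, ?_, ?_, ?_, ?_, ?_⟩
  · -- riskIndiff M ρ 0 < ⊤
    rw [hform 0 L.zero_mem, hB0, hr0, ← EReal.coe_sub]
    exact EReal.coe_lt_top _
  · -- monotone
    intro x hx y hy hxy
    rw [hform x hx, hform y hy]
    refine EReal.sub_le_sub (iInf₂_mono fun m hm =>
      hmono _ (hadd x hx m hm) _ (hadd y hy m hm) ?_) le_rfl
    exact hxy.mono fun ω h => add_le_add_right h (m ω)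
  · -- cash invariance
    intro x hx c
    have hxc : (fun ω => x ω + c) ∈ L := L.add_mem hx (hconst c)
    rw [hform _ hxc, hform x hx]
    have hstep : (⨅ m ∈ M, ρ (fun ω => m ω + (fun ω' => x ω' + c) ω))
        = (⨅ m ∈ M, ρ (fun ω => m ω + x ω)) - (c : EReal) := by
      rw [show (⨅ m ∈ M, ρ (fun ω => m ω + x ω)) - (c:EReal)
          = ⨅ m ∈ M, (ρ (fun ω => m ω + x ω) - (c:EReal)) by
        rw [ERealAux.iInf_sub_coe]
        exact iInf_congr fun m => ERealAux.iInf_sub_coe _ c]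
      refine iInf_congr fun m => iInf_congr fun hm => ?_
      rw [show (fun ω => m ω + (fun ω' => x ω' + c) ω)
          = (fun ω => (fun ω' => m ω' + x ω') ω + c) from funext fun ω => by
        show m ω + (x ω + c) = (m ω + x ω) + c; ring]
      exact hcash _ (hadd x hx m hm) c
    rw [hstep]
    exact ERealAux.sub_sub_comm _ c r0
  · -- convexity
    intro x hx y hy a ha0 ha1
    rcases eq_or_lt_of_le ha0 with h0 | ha0'
    · subst h0
      have hfun : (fun ω => (0:ℝ) * x ω + (1 - 0) * y ω) = y := funext fun ω => by ring_nf
      rw [hfun]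
      simp only [EReal.coe_zero, zero_mul, sub_zero, EReal.coe_one, one_mul, zero_add, le_refl]
    rcases eq_or_lt_of_le ha1 with h1 | ha1'
    · subst h1
      have hfun : (fun ω => (1:ℝ) * x ω + (1 - 1) * y ω) = x := funext fun ω => by ring_nf
      rw [hfun]
      simp only [EReal.coe_one, one_mul, sub_self, EReal.coe_zero, zero_mul, add_zero, le_refl]
    have hb0 : (0:ℝ) < 1 - a := by linarith
    have hcomboL : (fun ω => a * x ω + (1 - a) * y ω) ∈ L :=
      L.add_mem (L.smul_mem a hx) (L.smul_mem (1 - a) hy)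
    rw [hform _ hcomboL, hform x hx, hform y hy]
    -- main estimate on the infima
    have hmain : ∀ p q : ℝ, (⨅ m ∈ M, ρ (fun ω => m ω + x ω)) = (p : EReal) →
        (⨅ m ∈ M, ρ (fun ω => m ω + y ω)) = (q : EReal) →
        (⨅ m ∈ M, ρ (fun ω => m ω + (fun ω' => a * x ω' + (1 - a) * y ω') ω))
          ≤ ((a * p + (1 - a) * q : ℝ) : EReal) := by
      intro p q hp hq
      apply ERealAux.le_coe_of_forall_lt
      intro ε hε
      obtain ⟨m1, hm1M, hm1⟩ : ∃ m1 ∈ M, ρ (fun ω => m1 ω + x ω) < ((p + ε : ℝ) : EReal) := by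
        have hlt : (⨅ m ∈ M, ρ (fun ω => m ω + x ω)) < ((p + ε : ℝ) : EReal) := by
          rw [hp]; exact_mod_cast (by linarith : p < p + ε)
        obtain ⟨m1, h1⟩ := iInf_lt_iff.1 hlt
        obtain ⟨hm1M, h2⟩ := iInf_lt_iff.1 h1
        exact ⟨m1, hm1M, h2⟩
      obtain ⟨m2, hm2M, hm2⟩ : ∃ m2 ∈ M, ρ (fun ω => m2 ω + y ω) < ((q + ε : ℝ) : EReal) := by
        have hlt : (⨅ m ∈ M, ρ (fun ω => m ω + y ω)) < ((q + ε : ℝ) : EReal) := by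
          rw [hq]; exact_mod_cast (by linarith : q < q + ε)
        obtain ⟨m2, h1⟩ := iInf_lt_iff.1 hlt
        obtain ⟨hm2M, h2⟩ := iInf_lt_iff.1 h1
        exact ⟨m2, hm2M, h2⟩
      obtain ⟨t1, ht1⟩ : ∃ t1 : ℝ, ρ (fun ω => m1 ω + x ω) = (t1 : EReal) := by
        lift ρ (fun ω => m1 ω + x ω) to ℝ using
          ⟨(hm1.trans (EReal.coe_lt_top _)).ne, hbot _ (hadd x hx m1 hm1M)⟩ with t
        exact ⟨t, rfl⟩
      obtain ⟨t2, ht2⟩ : ∃ t2 : ℝ, ρ (fun ω => m2 ω + y ω) = (t2 : EReal) := by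
        lift ρ (fun ω => m2 ω + y ω) to ℝ using
          ⟨(hm2.trans (EReal.coe_lt_top _)).ne, hbot _ (hadd y hy m2 hm2M)⟩ with t
        exact ⟨t, rfl⟩
      have ht1' : t1 < p + ε := by rw [ht1] at hm1; exact_mod_cast hm1
      have ht2' : t2 < q + ε := by rw [ht2] at hm2; exact_mod_cast hm2
      have hmmM : a • m1 + (1 - a) • m2 ∈ M :=
        hMconv hm1M hm2M ha0'.le hb0.le (by ring)
      calc (⨅ m ∈ M, ρ (fun ω => m ω + (fun ω' => a * x ω' + (1 - a) * y ω') ω))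
          ≤ ρ (fun ω => (a • m1 + (1 - a) • m2) ω + (fun ω' => a * x ω' + (1 - a) * y ω') ω) :=
            iInf₂_le _ hmmM
      _ = ρ (fun ω => a * (fun ω' => m1 ω' + x ω') ω + (1 - a) * (fun ω' => m2 ω' + y ω') ω) := by
            refine congrArg ρ (funext fun ω => ?_)
            show (a • m1 + (1 - a) • m2) ω + (a * x ω + (1 - a) * y ω)
              = a * (m1 ω + x ω) + (1 - a) * (m2 ω + y ω)
            simp only [Pi.add_apply, Pi.smul_apply, smul_eq_mul]
            ring
      _ ≤ (a : EReal) * ρ (fun ω => m1 ω + x ω)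
            + ((1 - a : ℝ) : EReal) * ρ (fun ω => m2 ω + y ω) :=
            hconv _ (hadd x hx m1 hm1M) _ (hadd y hy m2 hm2M) a ha0 ha1
      _ = ((a * t1 + (1 - a) * t2 : ℝ) : EReal) := by
            rw [ht1, ht2]; norm_cast
      _ ≤ ((a * p + (1 - a) * q + ε : ℝ) : EReal) := by
            have h1 : a * t1 ≤ a * (p + ε) := mul_le_mul_of_nonneg_left ht1'.le ha0
            have h2 : (1 - a) * t2 ≤ (1 - a) * (q + ε) := mul_le_mul_of_nonneg_left ht2'.le hb0.le
            exact_mod_cast (by nlinarith : a * t1 + (1 - a) * t2 ≤ a * p + (1 - a) * q + ε)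
    -- case analysis on the two infima
    obtain ⟨q, hq⟩ | hyt :
        (∃ q : ℝ, (⨅ m ∈ M, ρ (fun ω => m ω + y ω)) = (q : EReal))
        ∨ (⨅ m ∈ M, ρ (fun ω => m ω + y ω)) = ⊤ := by
      obtain ht | hnt := eq_or_ne (⨅ m ∈ M, ρ (fun ω => m ω + y ω)) ⊤
      · exact Or.inr ht
      · refine Or.inl ?_
        lift (⨅ m ∈ M, ρ (fun ω => m ω + y ω)) to ℝ using ⟨hnt, hBbot y hy⟩ with q
        exact ⟨q, rfl⟩
    swap
    · -- B y = ⊤ : right-hand side is ⊤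
      rw [hyt, EReal.top_sub_coe]
      rw [show ((1 - a : ℝ) : EReal) * (⊤ : EReal) = ⊤ from
        EReal.coe_mul_top_of_pos hb0]
      rw [EReal.add_top_of_ne_bot]
      · exact le_top
      · exact ERealAux.coe_mul_ne_bot ha0' (ERealAux.sub_coe_ne_bot (hBbot x hx) r0)
    obtain ⟨p, hp⟩ | hxt :
        (∃ p : ℝ, (⨅ m ∈ M, ρ (fun ω => m ω + x ω)) = (p : EReal))
        ∨ (⨅ m ∈ M, ρ (fun ω => m ω + x ω)) = ⊤ := by
      obtain ht | hnt := eq_or_ne (⨅ m ∈ M, ρ (fun ω => m ω + x ω)) ⊤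
      · exact Or.inr ht
      · refine Or.inl ?_
        lift (⨅ m ∈ M, ρ (fun ω => m ω + x ω)) to ℝ using ⟨hnt, hBbot x hx⟩ with p
        exact ⟨p, rfl⟩
    swap
    · -- B x = ⊤
      rw [hxt, EReal.top_sub_coe]
      rw [show (a : EReal) * (⊤ : EReal) = ⊤ from EReal.coe_mul_top_of_pos ha0']
      rw [EReal.top_add_of_ne_bot]
      · exact le_top
      · exact ERealAux.coe_mul_ne_bot hb0 (ERealAux.sub_coe_ne_bot (hBbot y hy) r0)
    · -- both finite
      rw [hp, hq, ← EReal.coe_sub, ← EReal.coe_sub, ← EReal.coe_mul, ← EReal.coe_mul,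
        ← EReal.coe_add]
      calc (⨅ m ∈ M, ρ (fun ω => m ω + (fun ω' => a * x ω' + (1 - a) * y ω') ω)) - (r0 : EReal)
          ≤ ((a * p + (1 - a) * q : ℝ) : EReal) - (r0 : EReal) :=
            EReal.sub_le_sub (hmain p q hp hq) le_rfl
      _ = ((a * (p - r0) + (1 - a) * (q - r0) : ℝ) : EReal) := by
            rw [← EReal.coe_sub]; norm_cast; ring
      _ ≤ _ := le_refl _
  · -- conjugate
    intro g hgpos
    constructor
    · rintro ⟨hg1, hgM⟩
      rw [hr0]
      have hstep1 : conjRM (L : Set (Ω → ℝ)) (riskIndiff M ρ) g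
          = (⨆ x ∈ (L : Set (Ω → ℝ)), ((↑(g x) : EReal)
              - (⨅ m ∈ M, ρ (fun ω => m ω + (-x) ω)))) + (r0 : EReal) := by
        rw [conjRM]
        rw [show ((⨆ x ∈ (L : Set (Ω → ℝ)), ((↑(g x) : EReal)
              - ⨅ m ∈ M, ρ (fun ω => m ω + (-x) ω))) + (r0 : EReal))
            = ⨆ x ∈ (L : Set (Ω → ℝ)), (((↑(g x) : EReal)
              - ⨅ m ∈ M, ρ (fun ω => m ω + (-x) ω)) + (r0 : EReal)) by
          rw [ERealAux.iSup_add_coe]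
          exact iSup_congr fun x => ERealAux.iSup_add_coe _ r0]
        refine iSup_congr fun x => iSup_congr fun hx => ?_
        rw [hform (-x) (L.neg_mem hx)]
        exact ERealAux.coe_sub_sub _ _ (hBbot (-x) (L.neg_mem hx))
      rw [hstep1]
      congr 1
      apply le_antisymm
      · refine iSup₂_le fun x hx => ?_
        rw [show ((↑(g x) : EReal) - ⨅ m ∈ M, ρ (fun ω => m ω + (-x) ω))
            = ⨆ m ∈ M, ((↑(g x) : EReal) - ρ (fun ω => m ω + (-x) ω)) by
          rw [ERealAux.coe_sub_iInf]
          exact iSup_congr fun m => ERealAux.coe_sub_iInf _ _]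
        refine iSup₂_le fun m hm => ?_
        have hyL : x - m ∈ L := L.sub_mem hx (hML hm)
        have hρeq : ρ (fun ω => m ω + (-x) ω) = ρ (-(x - m)) := by
          refine congrArg ρ (funext fun ω => ?_)
          show m ω + (-x) ω = (-(x - m)) ω
          simp only [Pi.neg_apply, Pi.sub_apply]
          ring
        have hgle : g x ≤ g (x - m) := by
          have := hgM m hm
          rw [map_sub]
          linarith
        calc (↑(g x) : EReal) - ρ (fun ω => m ω + (-x) ω)
            ≤ (↑(g (x - m)) : EReal) - ρ (-(x - m)) := by
              rw [hρeq]
              exact EReal.sub_le_sub (EReal.coe_le_coe_iff.2 hgle) le_rfl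
        _ ≤ conjRM (L : Set (Ω → ℝ)) ρ g :=
              le_iSup₂ (f := fun x (_ : x ∈ (L : Set (Ω → ℝ))) =>
                (↑(g x) : EReal) - ρ (-x)) (x - m) hyL
      · rw [conjRM]
        refine iSup₂_le fun x hx => ?_
        have hle : (⨅ m ∈ M, ρ (fun ω => m ω + (-x) ω)) ≤ ρ (-x) := by
          refine iInf₂_le_of_le 0 h0M (le_of_eq ?_)
          exact congrArg ρ (funext fun ω => by simp)
        calc (↑(g x) : EReal) - ρ (-x)
            ≤ (↑(g x) : EReal) - ⨅ m ∈ M, ρ (fun ω => m ω + (-x) ω) :=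
              EReal.sub_le_sub le_rfl hle
        _ ≤ _ := le_iSup₂ (f := fun x (_ : x ∈ (L : Set (Ω → ℝ))) =>
              (↑(g x) : EReal) - ⨅ m ∈ M, ρ (fun ω => m ω + (-x) ω)) x hx
    · intro hneg
      rw [conjRM]
      by_cases hq : ∀ m ∈ M, g m ≤ 0
      · have hg1 : g (fun _ => 1) ≠ 1 := fun h => hneg ⟨h, hq⟩
        have hne : g (fun _ : Ω => 1) - 1 ≠ 0 := sub_ne_zero.2 hg1
        apply ERealAux.eq_top_of_forall_le
        intro K
        set c : ℝ := K / (g (fun _ => 1) - 1) with hc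
        have hcL : (fun _ : Ω => c) ∈ L := hconst c
        have hBc : (⨅ m ∈ M, ρ (fun ω => m ω + (-(fun _ : Ω => c)) ω))
            = ((r0 + c : ℝ) : EReal) := by
          have hstep : (⨅ m ∈ M, ρ (fun ω => m ω + (-(fun _ : Ω => c)) ω))
              = (⨅ m ∈ M, ρ m) - ((-c : ℝ) : EReal) := by
            rw [show (⨅ m ∈ M, ρ m) - ((-c : ℝ) : EReal)
                = ⨅ m ∈ M, (ρ m - ((-c : ℝ) : EReal)) by
              rw [ERealAux.iInf_sub_coe]
              exact iInf_congr fun m => ERealAux.iInf_sub_coe _ _]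
            refine iInf_congr fun m => iInf_congr fun hm => ?_
            exact hcash m (hML hm) (-c)
          rw [hstep, hr0, ← EReal.coe_sub]
          norm_num
        have hI : riskIndiff M ρ (-(fun _ : Ω => c)) = (c : EReal) := by
          rw [hform _ (L.neg_mem hcL), hBc, ← EReal.coe_sub]
          norm_num
        have hgc : g (fun _ : Ω => c) = c * g (fun _ : Ω => 1) := by
          rw [show (fun _ : Ω => c) = c • (fun _ : Ω => (1 : ℝ)) from funext fun ω => by simp,
            g.map_smul, smul_eq_mul]
        calc (K : EReal)
            = (↑(g (fun _ : Ω => c)) : EReal) - riskIndiff M ρ (-(fun _ : Ω => c)) := by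
              rw [hI, hgc, ← EReal.coe_sub]
              norm_cast
              rw [hc]
              field_simp
        _ ≤ _ := le_iSup₂ (f := fun x (_ : x ∈ (L : Set (Ω → ℝ))) =>
              (↑(g x) : EReal) - riskIndiff M ρ (-x)) _ hcL
      · push_neg at hq
        obtain ⟨m0, hm0M, hgm0⟩ := hq
        obtain ⟨s, hs⟩ : ∃ s : ℝ, ρ 0 = (s : EReal) := by
          lift ρ 0 to ℝ using ⟨hproper.ne, hbot 0 L.zero_mem⟩ with s
          exact ⟨s, rfl⟩
        apply ERealAux.eq_top_of_forall_le
        intro K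
        set c : ℝ := max 0 ((K + s - r0) / g m0) with hc
        have hc0 : 0 ≤ c := le_max_left _ _
        have hxM : c • m0 ∈ M := hMcone m0 hm0M c hc0
        have hxL : c • m0 ∈ L := hML hxM
        have hB : (⨅ m ∈ M, ρ (fun ω => m ω + (-(c • m0)) ω)) ≤ (s : EReal) := by
          refine iInf₂_le_of_le (c • m0) hxM (le_of_eq ?_)
          rw [show (fun ω => (c • m0) ω + (-(c • m0)) ω) = (0 : Ω → ℝ) from
            funext fun ω => by simp]
          exact hs
        have hI : riskIndiff M ρ (-(c • m0)) ≤ ((s - r0 : ℝ) : EReal) := by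
          rw [hform _ (L.neg_mem hxL), EReal.coe_sub]
          exact EReal.sub_le_sub hB le_rfl
        have hcK : K ≤ c * g m0 - (s - r0) := by
          have hmax : (K + s - r0) / g m0 ≤ c := le_max_right _ _
          have h2 : K + s - r0 ≤ c * g m0 := by
            rw [div_le_iff₀ hgm0] at hmax
            linarith
          linarith
        calc (K : EReal) ≤ ((c * g m0 - (s - r0) : ℝ) : EReal) := by exact_mod_cast hcK
        _ = ((c * g m0 : ℝ) : EReal) - ((s - r0 : ℝ) : EReal) := by rw [← EReal.coe_sub]
        _ ≤ (↑(g (c • m0)) : EReal) - riskIndiff M ρ (-(c • m0)) := by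
              rw [g.map_smul, smul_eq_mul]
              exact EReal.sub_le_sub le_rfl hI
        _ ≤ _ := le_iSup₂ (f := fun x (_ : x ∈ (L : Set (Ω → ℝ))) =>
              (↑(g x) : EReal) - riskIndiff M ρ (-x)) _ hxL
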